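/- The local marginal polytope relaxation is not tight on cycles: fix K ≥ 3, let the graph be the K-cycle with vertices 0,…,K−1 and edges (k, k+1 mod K), let y_0,…,y_{2K−1} be 2K equally spaced points on the unit circle S^1 ordered so that d_g(y_j, y_{j+1}) = π/K (indices mod 2K), let the unary terms be the indicator functions f_k = ι_{{y_k, y_{k+K}}} and the couplings be the geodesic distance d_g. Then (a) the minimum of F_K(x) = Σ_{k=0}^{K−1} ι_{{y_k,y_{k+K}}}(x_k) + Σ_{k=0}^{K−1} d_g(x_k, x_{k+1}) over x ∈ (S^1)^V equals 2π(K−1)/K, attained at x* = (y_0, y_1, …, y_{K−1}); and (b) the family μ*_k = (δ_{y_k} + δ_{y_{k+K}})/2 is feasible for the local marginal polytope relaxation with cost at most π < 2π(K−1)/K, so the relaxation is strictly below the minimum of the original problem. -/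

import Mathlib

open MeasureTheory
open scoped RealInnerProductSpace ENNReal

/-- The point `(cos θ, sin θ)` on the unit circle `S^1 ⊆ ℝ²`. -/
noncomputable def circlePt (θ : ℝ) : Metric.sphere (0 : EuclideanSpace ℝ (Fin 2)) 1 :=
  ⟨(WithLp.equiv 2 (Fin 2 → ℝ)).symm ![Real.cos θ, Real.sin θ], by
    rw [mem_sphere_zero_iff_norm, EuclideanSpace.norm_eq]
    simp [Fin.sum_univ_two, Real.norm_eq_abs, sq_abs, Real.sin_sq_add_cos_sq]⟩

/-- Geodesic distance on the unit circle: `d_g(x, y) = arccos ⟨x, y⟩`. -/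
noncomputable def geodC (x y : Metric.sphere (0 : EuclideanSpace ℝ (Fin 2)) 1) : ℝ :=
  Real.arccos ⟪(x : EuclideanSpace ℝ (Fin 2)), (y : EuclideanSpace ℝ (Fin 2))⟫

/-- `2K` equally spaced points on the unit circle: `y_j = (cos (jπ/K), sin (jπ/K))`,
indexed mod `2K`, so that `d_g(y_j, y_{j+1}) = π/K`. -/
noncomputable def ypt (K : ℕ) (j : ZMod (2 * K)) :
    Metric.sphere (0 : EuclideanSpace ℝ (Fin 2)) 1 :=
  circlePt ((j.val : ℝ) * Real.pi / K)

/-- The embedding of the vertex indices mod `K` into the point indices mod `2K`. -/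
def emb (K : ℕ) (k : ZMod K) : ZMod (2 * K) := (k.val : ZMod (2 * K))

/-- Optimal transport cost between two measures with cost `c`. -/
noncomputable def OTcost {Ω : Type*} [MeasurableSpace Ω]
    (c : Ω → Ω → ℝ) (μ ν : Measure Ω) : ℝ :=
  sInf {r : ℝ | ∃ π : Measure (Ω × Ω), IsProbabilityMeasure π ∧
    π.map Prod.fst = μ ∧ π.map Prod.snd = ν ∧ r = ∫ p, c p.1 p.2 ∂π}

/-- The measures `μ*_k = (δ_{y_k} + δ_{y_{k+K}})/2`. -/
noncomputable def mustar (K : ℕ) (k : ZMod K) :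
    Measure (Metric.sphere (0 : EuclideanSpace ℝ (Fin 2)) 1) :=
  (1 / 2 : ℝ≥0∞) • (Measure.dirac (ypt K (emb K k)) +
    Measure.dirac (ypt K (emb K k + (K : ZMod (2 * K)))))

lemma inner_circlePt (θ φ : ℝ) :
    ⟪((circlePt θ : Metric.sphere (0 : EuclideanSpace ℝ (Fin 2)) 1) : EuclideanSpace ℝ (Fin 2)),
      ((circlePt φ : Metric.sphere (0 : EuclideanSpace ℝ (Fin 2)) 1) : EuclideanSpace ℝ (Fin 2))⟫
      = Real.cos (φ - θ) := by
  simp [circlePt, PiLp.inner_apply, Fin.sum_univ_two, Real.cos_sub, RCLike.inner_apply]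

lemma geod_ypt (K : ℕ) [NeZero K] (a b : ZMod (2 * K)) :
    geodC (ypt K a) (ypt K b) =
      ((min (b - a).val (2 * K - (b - a).val) : ℕ) : ℝ) * Real.pi / K := by
  have hK : (0 : ℝ) < K := by
    exact_mod_cast Nat.pos_of_ne_zero (NeZero.ne K)
  have hKne : (K : ℝ) ≠ 0 := hK.ne'
  have h2K : NeZero (2 * K) := ⟨Nat.mul_ne_zero two_ne_zero (NeZero.ne K)⟩
  have hvlt : (b - a).val < 2 * K := ZMod.val_lt _
  have hdvd : (2 * K : ℤ) ∣ (((b - a).val : ℤ) - ((b.val : ℤ) - (a.val : ℤ))) := by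
    have : ((((b - a).val : ℤ) - ((b.val : ℤ) - (a.val : ℤ)) : ℤ) : ZMod (2 * K)) = 0 := by
      push_cast [ZMod.natCast_val, ZMod.cast_id]
      ring
    exact_mod_cast (ZMod.intCast_zmod_eq_zero_iff_dvd _ _).mp this
  obtain ⟨n, hn⟩ := hdvd
  set v : ℕ := (b - a).val with hv
  have hnr : ((v : ℝ) - ((b.val : ℝ) - (a.val : ℝ))) = 2 * K * n := by exact_mod_cast hn
  have e : ((b.val : ℝ) - (a.val : ℝ)) = (v : ℝ) - 2 * K * n := by linarith
  have hangle : ((b.val : ℝ) * Real.pi / K - (a.val : ℝ) * Real.pi / K)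
      = (v : ℝ) * Real.pi / K - (n : ℝ) * (2 * Real.pi) := by
    have : ((b.val : ℝ) * Real.pi / K - (a.val : ℝ) * Real.pi / K)
        = ((b.val : ℝ) - (a.val : ℝ)) * Real.pi / K := by ring
    rw [this, e]
    field_simp
  have key : geodC (ypt K a) (ypt K b) = Real.arccos (Real.cos ((v : ℝ) * Real.pi / K)) := by
    rw [geodC, ypt, ypt, inner_circlePt, hangle, Real.cos_sub_int_mul_two_pi]
  rcases le_or_gt v K with h | h
  · have hmin : min v (2 * K - v) = v := by omega
    have hvK : (v : ℝ) ≤ K := by exact_mod_cast h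
    rw [key, Real.arccos_cos (by positivity)
      (by rw [div_le_iff₀ hK]; nlinarith [Real.pi_pos]), hmin]
  · have hmin : min v (2 * K - v) = 2 * K - v := by omega
    have hcos : Real.cos ((v : ℝ) * Real.pi / K)
        = Real.cos (((2 * K - v : ℕ) : ℝ) * Real.pi / K) := by
      rw [← Real.cos_two_pi_sub]
      congr 1
      have h' : ((2 * K - v : ℕ) : ℝ) = 2 * K - v := by
        push_cast [Nat.cast_sub hvlt.le]; ring
      rw [h']; field_simp
    have h1 : (0:ℝ) ≤ ((2 * K - v : ℕ) : ℝ) * Real.pi / K := by positivity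
    have h2 : ((2 * K - v : ℕ) : ℝ) * Real.pi / K ≤ Real.pi := by
      rw [div_le_iff₀ hK]
      have h3 : ((2 * K - v : ℕ) : ℝ) ≤ K := by
        have : (2 * K - v : ℕ) ≤ K := by omega
        exact_mod_cast this
      nlinarith [Real.pi_pos]
    rw [key, hcos, Real.arccos_cos h1 h2, hmin]

lemma val_succ_of_lt {K : ℕ} [NeZero K] (hK : 3 ≤ K) {k : ZMod K} (h : k.val + 1 < K) :
    (k + 1).val = k.val + 1 := by
  haveI : Fact (1 < K) := ⟨by omega⟩
  rw [ZMod.val_add, ZMod.val_one, Nat.mod_eq_of_lt h]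

lemma val_succ_of_eq {K : ℕ} [NeZero K] (hK : 3 ≤ K) {k : ZMod K} (h : k.val + 1 = K) :
    (k + 1).val = 0 := by
  haveI : Fact (1 < K) := ⟨by omega⟩
  rw [ZMod.val_add, ZMod.val_one, h, Nat.mod_self]

lemma emb_succ_of_lt {K : ℕ} [NeZero K] (hK : 3 ≤ K) {k : ZMod K} (h : k.val + 1 < K) :
    emb K (k + 1) = emb K k + 1 := by
  unfold emb
  rw [val_succ_of_lt hK h]
  push_cast
  ring

lemma emb_succ_of_eq {K : ℕ} [NeZero K] (hK : 3 ≤ K) {k : ZMod K} (h : k.val + 1 = K) :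
    emb K (k + 1) = emb K k + 1 + K := by
  unfold emb
  rw [val_succ_of_eq hK h]
  have : ((k.val : ZMod (2 * K)) + 1 + K) = ((k.val + 1 + K : ℕ) : ZMod (2 * K)) := by push_cast; ring
  rw [this, h]
  have : (K + K : ℕ) = 2 * K := by ring
  rw [this]
  simp [ZMod.natCast_self]

lemma geod_ypt_add (K : ℕ) [NeZero K] (a : ZMod (2 * K)) (w : ℕ) (hw : w < 2 * K) :
    geodC (ypt K a) (ypt K (a + (w : ZMod (2 * K)))) =
      ((min w (2 * K - w) : ℕ) : ℝ) * Real.pi / K := by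
  haveI : NeZero (2 * K) := ⟨Nat.mul_ne_zero two_ne_zero (NeZero.ne K)⟩
  rw [geod_ypt]
  congr 3 <;> rw [add_sub_cancel_left, ZMod.val_cast_of_lt hw]

lemma geod_near {K : ℕ} [NeZero K] (hK : 3 ≤ K) (a : ZMod (2 * K)) :
    geodC (ypt K a) (ypt K (a + 1)) = Real.pi / K := by
  have := geod_ypt_add K a 1 (by omega)
  rw [Nat.cast_one] at this
  rw [this, min_eq_left (by omega)]
  simp

lemma geod_far {K : ℕ} [NeZero K] (hK : 3 ≤ K) (a : ZMod (2 * K)) :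
    geodC (ypt K a) (ypt K (a + (1 + (K : ZMod (2 * K))))) = ((K - 1 : ℕ) : ℝ) * Real.pi / K := by
  have := geod_ypt_add K a (1 + K) (by omega)
  rw [Nat.cast_add, Nat.cast_one] at this
  rw [this, show min (1 + K) (2 * K - (1 + K)) = K - 1 by omega]

lemma KK_zero (K : ℕ) : (K : ZMod (2 * K)) + K = 0 := by
  have : ((K : ZMod (2 * K)) + K) = ((2 * K : ℕ) : ZMod (2 * K)) := by push_cast; ring
  rw [this, ZMod.natCast_self]

lemma edge_cases {K : ℕ} [NeZero K] (hK : 3 ≤ K) (A : ZMod K → ZMod (2 * K))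
    (hA : ∀ k, A k = emb K k ∨ A k = emb K k + K) (k : ZMod K) :
    A (k + 1) = A k + 1 ∨ A (k + 1) = A k + (1 + (K : ZMod (2 * K))) := by
  have hKK := KK_zero K
  have hkv : k.val < K := ZMod.val_lt k
  have hemb : emb K (k + 1) = emb K k + 1 ∨ emb K (k + 1) = emb K k + 1 + K := by
    rcases Nat.lt_or_ge (k.val + 1) K with h | h
    · exact Or.inl (emb_succ_of_lt hK h)
    · exact Or.inr (emb_succ_of_eq hK (by omega))
  rcases hA k with h0 | h0 <;> rcases hA (k + 1) with h1 | h1 <;>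
    rcases hemb with h2 | h2 <;> rw [h1, h2, h0] <;>
    first
      | (left; ring1)
      | (right; ring1)
      | (left; linear_combination hKK)
      | (right; linear_combination hKK)
      | (left; linear_combination -hKK)
      | (right; linear_combination -hKK)

lemma exists_far {K : ℕ} [NeZero K] (hK : 3 ≤ K) (A : ZMod K → ZMod (2 * K))
    (hstep : ∀ k, A (k + 1) = A k + 1 ∨ A (k + 1) = A k + (1 + (K : ZMod (2 * K)))) :
    ∃ k, A (k + 1) = A k + (1 + (K : ZMod (2 * K))) := by
  by_contra hne
  push_neg at hne
  have hall : ∀ k, A (k + 1) = A k + 1 := fun k => (hstep k).resolve_right (hne k)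
  have hsum : ∑ k : ZMod K, (A (k + 1) - A k) = 0 := by
    have h1 : ∑ k : ZMod K, A (k + 1) = ∑ k : ZMod K, A k :=
      Fintype.sum_equiv (Equiv.addRight (1 : ZMod K)) _ _ (fun k => rfl)
    rw [Finset.sum_sub_distrib, h1, sub_self]
  have hsum2 : ∑ k : ZMod K, (A (k + 1) - A k) = (K : ZMod (2 * K)) := by
    calc ∑ k : ZMod K, (A (k + 1) - A k) = ∑ _k : ZMod K, (1 : ZMod (2 * K)) := by
          apply Finset.sum_congr rfl
          intro k _
          rw [hall k]; ring
      _ = (K : ZMod (2 * K)) := by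
          rw [Finset.sum_const, Finset.card_univ, ZMod.card, nsmul_eq_mul, mul_one]
  rw [hsum] at hsum2
  have : (2 * K) ∣ K := by
    exact_mod_cast (ZMod.natCast_eq_zero_iff K (2 * K)).mp hsum2.symm
  have := Nat.le_of_dvd (by omega) this
  omega

lemma final_arith {K : ℕ} (hK : 3 ≤ K) :
    ((K - 1 : ℕ) : ℝ) * Real.pi / K + (K - 1 : ℕ) • (Real.pi / K)
      = 2 * Real.pi * ((K : ℝ) - 1) / K := by
  have h1 : ((K - 1 : ℕ) : ℝ) = (K : ℝ) - 1 := by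
    push_cast [Nat.cast_sub (by omega : 1 ≤ K)]; ring
  rw [nsmul_eq_mul, h1]
  ring

lemma sum_exact {K : ℕ} [NeZero K] (hK : 3 ≤ K) :
    ∑ k : ZMod K, geodC (ypt K (emb K k)) (ypt K (emb K (k + 1)))
      = 2 * Real.pi * ((K : ℝ) - 1) / K := by
  set f : ZMod K → ℝ := fun k => geodC (ypt K (emb K k)) (ypt K (emb K (k + 1))) with hf
  set k₀ : ZMod K := ((K - 1 : ℕ) : ZMod K) with hk₀
  have hval : k₀.val = K - 1 := ZMod.val_cast_of_lt (by omega)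
  have hfk₀ : f k₀ = ((K - 1 : ℕ) : ℝ) * Real.pi / K := by
    rw [hf]
    simp only
    rw [emb_succ_of_eq hK (by omega), show emb K k₀ + 1 + (K : ZMod (2 * K))
      = emb K k₀ + (1 + (K : ZMod (2 * K))) by ring, geod_far hK]
  have hrest : ∀ k ∈ Finset.univ.erase k₀, f k = Real.pi / K := by
    intro k hk
    have hne : k ≠ k₀ := (Finset.mem_erase.mp hk).1
    have hkv : k.val < K := ZMod.val_lt k
    have : k.val ≠ K - 1 := by
      intro h
      exact hne (ZMod.val_injective K (by rw [h, hval]))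
    rw [hf]
    simp only
    rw [emb_succ_of_lt hK (by omega), geod_near hK]
  rw [← Finset.add_sum_erase _ f (Finset.mem_univ k₀), hfk₀,
    Finset.sum_congr rfl hrest, Finset.sum_const,
    Finset.card_erase_of_mem (Finset.mem_univ k₀), Finset.card_univ, ZMod.card,
    final_arith hK]

lemma sum_lower {K : ℕ} [NeZero K] (hK : 3 ≤ K) (A : ZMod K → ZMod (2 * K))
    (hstep : ∀ k, A (k + 1) = A k + 1 ∨ A (k + 1) = A k + (1 + (K : ZMod (2 * K)))) :
    2 * Real.pi * ((K : ℝ) - 1) / K ≤ ∑ k : ZMod K, geodC (ypt K (A k)) (ypt K (A (k + 1))) := by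
  have hKpos : (0 : ℝ) < K := by exact_mod_cast (by omega : 0 < K)
  set f : ZMod K → ℝ := fun k => geodC (ypt K (A k)) (ypt K (A (k + 1))) with hf
  obtain ⟨k₀, hk₀⟩ := exists_far hK A hstep
  have hfk₀ : f k₀ = ((K - 1 : ℕ) : ℝ) * Real.pi / K := by
    rw [hf]; simp only; rw [hk₀, geod_far hK]
  have hrest : ∀ k ∈ Finset.univ.erase k₀, Real.pi / K ≤ f k := by
    intro k _
    rcases hstep k with h | h <;> rw [hf] <;> simp only <;> rw [h]
    · rw [geod_near hK]
    · rw [geod_far hK]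
      have : (1 : ℝ) ≤ ((K - 1 : ℕ) : ℝ) := by exact_mod_cast (by omega : 1 ≤ K - 1)
      have hpi := Real.pi_pos
      rw [show Real.pi / (K : ℝ) = 1 * Real.pi / K by ring]
      gcongr
  calc 2 * Real.pi * ((K : ℝ) - 1) / K
      = ((K - 1 : ℕ) : ℝ) * Real.pi / K + (K - 1 : ℕ) • (Real.pi / K) := (final_arith hK).symm
    _ ≤ f k₀ + ∑ k ∈ Finset.univ.erase k₀, f k := by
        rw [hfk₀]
        gcongr
        have := Finset.card_nsmul_le_sum (Finset.univ.erase k₀) f (Real.pi / K) hrest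
        rwa [Finset.card_erase_of_mem (Finset.mem_univ k₀), Finset.card_univ, ZMod.card] at this
    _ = ∑ k : ZMod K, f k := Finset.add_sum_erase _ f (Finset.mem_univ k₀)

section Meas
variable {Ω : Type*} [MeasurableSpace Ω] [MeasurableSingletonClass Ω]

lemma half_two : (1 / 2 : ℝ≥0∞) * 2 = 1 := by
  rw [one_div, ENNReal.inv_mul_cancel two_ne_zero ENNReal.ofNat_ne_top]

lemma isProb_half (u v : Ω) :
    IsProbabilityMeasure ((1 / 2 : ℝ≥0∞) • (Measure.dirac u + Measure.dirac v)) := by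
  constructor
  rw [Measure.smul_apply, Measure.add_apply, measure_univ, measure_univ, smul_eq_mul]
  exact (by rw [one_add_one_eq_two]; exact half_two)

lemma half_pair (u v : Ω) (s : Set Ω) (hu : u ∈ s) (hv : v ∈ s) :
    ((1 / 2 : ℝ≥0∞) • (Measure.dirac u + Measure.dirac v)) s = 1 := by
  rw [Measure.smul_apply, Measure.add_apply, Measure.dirac_apply, Measure.dirac_apply,
    Set.indicator_of_mem hu, Set.indicator_of_mem hv, smul_eq_mul, Pi.one_apply,
    Pi.one_apply, one_add_one_eq_two, half_two]

lemma integrable_dirac' (f : Ω → ℝ) (a : Ω) : Integrable f (Measure.dirac a) := by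
  refine (integrable_const (f a)).congr ?_
  rw [ae_dirac_eq]
  exact Filter.eventually_pure.mpr rfl

lemma OTcost_le_pair (c : Ω → Ω → ℝ) (hc0 : ∀ x y, 0 ≤ c x y) (u v u' v' : Ω) :
    OTcost c ((1 / 2 : ℝ≥0∞) • (Measure.dirac u + Measure.dirac v))
      ((1 / 2 : ℝ≥0∞) • (Measure.dirac u' + Measure.dirac v'))
      ≤ (c u u' + c v v') / 2 := by
  apply csInf_le
  · refine ⟨0, fun r hr => ?_⟩
    obtain ⟨π, _, _, _, hr⟩ := hr
    rw [hr]
    exact integral_nonneg fun p => hc0 _ _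
  · refine ⟨(1 / 2 : ℝ≥0∞) • (Measure.dirac (u, u') + Measure.dirac (v, v')),
      isProb_half _ _, ?_, ?_, ?_⟩
    · rw [Measure.map_smul, Measure.map_add _ _ measurable_fst,
        Measure.map_dirac' measurable_fst, Measure.map_dirac' measurable_fst]
    · rw [Measure.map_smul, Measure.map_add _ _ measurable_snd,
        Measure.map_dirac' measurable_snd, Measure.map_dirac' measurable_snd]
    · rw [integral_smul_measure, integral_add_measure (_root_.integrable_dirac' _ _)
        (_root_.integrable_dirac' _ _), integral_dirac, integral_dirac]
      simp only [ENNReal.toReal_div, ENNReal.toReal_one, ENNReal.toReal_ofNat, smul_eq_mul]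
      ring

end Meas

lemma geodC_nonneg (x y : Metric.sphere (0 : EuclideanSpace ℝ (Fin 2)) 1) : 0 ≤ geodC x y :=
  Real.arccos_nonneg _

lemma mustar_succ {K : ℕ} [NeZero K] (hK : 3 ≤ K) (k : ZMod K) :
    mustar K (k + 1) = (1 / 2 : ℝ≥0∞) • (Measure.dirac (ypt K (emb K k + 1)) +
      Measure.dirac (ypt K (emb K k + 1 + (K : ZMod (2 * K))))) := by
  have hKK := KK_zero K
  rcases Nat.lt_or_ge (k.val + 1) K with h | h
  · rw [mustar, emb_succ_of_lt hK h]
  · have hlt := ZMod.val_lt k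
    have he : emb K (k + 1) = emb K k + 1 + K := emb_succ_of_eq hK (by omega)
    rw [mustar, he, show emb K k + 1 + (K : ZMod (2 * K)) + K = emb K k + 1 by
      rw [add_assoc, hKK, add_zero], add_comm (Measure.dirac _)]

lemma OT_edge {K : ℕ} [NeZero K] (hK : 3 ≤ K) (k : ZMod K) :
    OTcost geodC (mustar K k) (mustar K (k + 1)) ≤ Real.pi / K := by
  rw [mustar, mustar_succ hK k]
  have hb := OTcost_le_pair geodC (fun x y => geodC_nonneg x y)
    (ypt K (emb K k)) (ypt K (emb K k + K))
    (ypt K (emb K k + 1)) (ypt K (emb K k + 1 + K))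
  refine hb.trans (le_of_eq ?_)
  rw [geod_near hK, show emb K k + 1 + (K : ZMod (2 * K)) = (emb K k + K) + 1 by ring,
    geod_near hK]
  ring


/-- the local marginal polytope relaxation is not tight on the `K`-cycle:
(a) the minimum of `F_K` (unary indicator terms of `{y_k, y_{k+K}}`, geodesic couplings on
the cycle) is `2π(K−1)/K`, attained at `x* = (y_0, …, y_{K−1})`; (b) the measures
`μ*_k = (δ_{y_k} + δ_{y_{k+K}})/2` are feasible for the relaxation (probability measures
charging only the allowed points) with pairwise transport cost summing to at most
`π < 2π(K−1)/K`. -/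
theorem stmt_16 (K : ℕ) (hK : 3 ≤ K) [NeZero K] :
    (IsLeast {r : ℝ | ∃ x : ZMod K → Metric.sphere (0 : EuclideanSpace ℝ (Fin 2)) 1,
        (∀ k : ZMod K, x k = ypt K (emb K k) ∨
          x k = ypt K (emb K k + (K : ZMod (2 * K)))) ∧
        r = ∑ k : ZMod K, geodC (x k) (x (k + 1))}
      (2 * Real.pi * ((K : ℝ) - 1) / K)) ∧
    (∑ k : ZMod K, geodC (ypt K (emb K k)) (ypt K (emb K (k + 1))) =
      2 * Real.pi * ((K : ℝ) - 1) / K) ∧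
    (∀ k : ZMod K, IsProbabilityMeasure (mustar K k)) ∧
    (∀ k : ZMod K, mustar K k
        ({ypt K (emb K k), ypt K (emb K k + (K : ZMod (2 * K)))} :
          Set (Metric.sphere (0 : EuclideanSpace ℝ (Fin 2)) 1)) = 1) ∧
    (∑ k : ZMod K, OTcost geodC (mustar K k) (mustar K (k + 1)) ≤ Real.pi) ∧
    Real.pi < 2 * Real.pi * ((K : ℝ) - 1) / K := by
  classical
  have hKpos : (0 : ℝ) < K := by exact_mod_cast (by omega : 0 < K)
  have hKne : (K : ℝ) ≠ 0 := hKpos.ne'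
  refine ⟨⟨⟨fun k => ypt K (emb K k), fun k => Or.inl rfl, (sum_exact hK).symm⟩, ?_⟩,
    sum_exact hK, fun k => isProb_half _ _,
    fun k => half_pair _ _ _ (Set.mem_insert _ _) (Set.mem_insert_of_mem _ rfl), ?_, ?_⟩
  · rintro r ⟨x, hx, rfl⟩
    set A : ZMod K → ZMod (2 * K) := fun k =>
      if x k = ypt K (emb K k) then emb K k else emb K k + K with hAdef
    have hA : ∀ k, A k = emb K k ∨ A k = emb K k + K := by
      intro k
      by_cases h : x k = ypt K (emb K k) <;> simp [hAdef, h]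
    have hxA : ∀ k, x k = ypt K (A k) := by
      intro k
      by_cases h : x k = ypt K (emb K k)
      · simp [hAdef, h]
      · rcases hx k with h' | h'
        · exact absurd h' h
        · rw [h', hAdef]
          simp only [if_neg h]
    have := sum_lower hK A (edge_cases hK A hA)
    calc 2 * Real.pi * ((K : ℝ) - 1) / K
        ≤ ∑ k : ZMod K, geodC (ypt K (A k)) (ypt K (A (k + 1))) := this
      _ = ∑ k : ZMod K, geodC (x k) (x (k + 1)) := by
          refine Finset.sum_congr rfl fun k _ => ?_
          rw [hxA k, hxA (k + 1)]
  · calc ∑ k : ZMod K, OTcost geodC (mustar K k) (mustar K (k + 1))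
        ≤ ∑ _k : ZMod K, Real.pi / K :=
          Finset.sum_le_sum fun k _ => OT_edge hK k
      _ = Real.pi := by
          rw [Finset.sum_const, Finset.card_univ, ZMod.card, nsmul_eq_mul]
          field_simp
  · rw [lt_div_iff₀ hKpos]
    have hpi := Real.pi_pos
    have h3 : (3 : ℝ) ≤ K := by exact_mod_cast hK
    nlinarith
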